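/- For N ≥ 1 and 1 ≤ p ≤ N-1, the polynomial Φ_N(x_1,...,x_N) = Σ_{d=1}^N (-1)^d (1/d) Σ_{i_1+...+i_d = N} x_{i_1}···x_{i_d} satisfies the first-order PDE (∂/∂x_p)Φ_N + Σ_{h=p+1}^N x_{h-p} (∂/∂x_h)Φ_N = 0. -/

import Mathlib

open MvPolynomial Finset

/-- The Cayley polynomial `Φ_N = ∑_{d=1}^N (-1)^d (1/d) ∑_{i₁+⋯+i_d = N, iₖ ≥ 1} x_{i₁}⋯x_{i_d}`,
as a multivariate polynomial in variables `X 1, …, X N`. -/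
noncomputable def cayley (N : ℕ) : MvPolynomial ℕ ℝ :=
  ∑ d ∈ Finset.Icc 1 N, ((-1 : ℝ) ^ d * (d : ℝ)⁻¹) •
    ∑ t ∈ (Finset.Nat.antidiagonalTuple d N).filter (fun t => ∀ i, 0 < t i),
      ∏ i, MvPolynomial.X (t i)

noncomputable section CayleyAux

open Polynomial

abbrev RR := MvPolynomial ℕ ℝ

/-- Coefficient-wise lift of a derivation to the polynomial ring. -/
def liftD (d : Derivation ℝ RR RR) : Derivation ℝ (Polynomial RR) (Polynomial RR) :=
  PolynomialModule.equivPolynomialSelf.compDer d.mapCoeffs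

lemma coeff_liftD (d : Derivation ℝ RR RR) (f : Polynomial RR) (i : ℕ) :
    (liftD d f).coeff i = d (f.coeff i) := rfl

lemma liftD_monomial (d : Derivation ℝ RR RR) (n : ℕ) (a : RR) :
    liftD d (Polynomial.monomial n a) = Polynomial.monomial n (d a) := by
  ext i
  rw [coeff_liftD]
  simp [Polynomial.coeff_monomial, apply_ite d]

lemma sum_antidiagonalTuple_succ {M : Type*} [AddCommMonoid M] (d n : ℕ)
    (g : (Fin (d + 1) → ℕ) → M) :
    ∑ t ∈ Finset.Nat.antidiagonalTuple (d + 1) n, g t =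
      ∑ ab ∈ Finset.HasAntidiagonal.antidiagonal n, ∑ s ∈ Finset.Nat.antidiagonalTuple d ab.2,
        g (Fin.cons ab.1 s) := by
  rw [Finset.sum_sigma']
  refine Finset.sum_nbij' (fun t => ⟨(t 0, ∑ i, Fin.tail t i), Fin.tail t⟩)
    (fun x => Fin.cons x.1.1 x.2) ?_ ?_ ?_ ?_ ?_
  · intro t ht
    rw [Finset.Nat.mem_antidiagonalTuple] at ht
    simp only [Finset.mem_sigma, Finset.HasAntidiagonal.mem_antidiagonal, Finset.Nat.mem_antidiagonalTuple]
    refine ⟨?_, trivial⟩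
    rw [← ht, Fin.sum_univ_succ]
    rfl
  · rintro ⟨⟨a, b⟩, s⟩ hx
    simp only [Finset.mem_sigma, Finset.HasAntidiagonal.mem_antidiagonal, Finset.Nat.mem_antidiagonalTuple] at hx
    rw [Finset.Nat.mem_antidiagonalTuple]
    dsimp only
    rw [Fin.sum_univ_succ, Fin.cons_zero]
    simp only [Fin.cons_succ]
    rw [hx.2, hx.1]
  · intro t ht
    exact Fin.cons_self_tail t
  · rintro ⟨⟨a, b⟩, s⟩ hx
    simp only [Finset.mem_sigma, Finset.HasAntidiagonal.mem_antidiagonal, Finset.Nat.mem_antidiagonalTuple] at hx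
    have h1 : Fin.tail (Fin.cons a s : Fin (d+1) → ℕ) = s := by
      ext i; simp
    refine Sigma.ext ?_ ?_
    · dsimp only
      rw [Fin.cons_zero, h1, hx.2]
    · dsimp only
      rw [h1]
  · intro t ht
    dsimp only
    exact (congrArg g (Fin.cons_self_tail t)).symm

lemma coeff_pow_eq {R : Type*} [CommSemiring R] (f : Polynomial R) (d n : ℕ) :
    (f ^ d).coeff n = ∑ t ∈ Finset.Nat.antidiagonalTuple d n, ∏ i, f.coeff (t i) := by
  induction d generalizing n with
  | zero =>
    cases n with
    | zero => simp
    | succ m => simp [Polynomial.coeff_one]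
  | succ d ih =>
    rw [pow_succ', Polynomial.coeff_mul, sum_antidiagonalTuple_succ]
    refine Finset.sum_congr rfl fun ab hab => ?_
    rw [ih, Finset.mul_sum]
    refine Finset.sum_congr rfl fun s hs => ?_
    rw [Fin.prod_univ_succ, Fin.cons_zero]
    simp only [Fin.cons_succ]

/-- `F = ∑_{k=1}^N x_k t^k`. -/
def FF (N : ℕ) : Polynomial RR :=
  ∑ k ∈ Finset.Icc 1 N, Polynomial.monomial k (MvPolynomial.X k : RR)

lemma coeff_FF (N k : ℕ) :
    (FF N).coeff k = if k ∈ Finset.Icc 1 N then (MvPolynomial.X k : RR) else 0 := by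
  rw [FF, Polynomial.finset_sum_coeff]
  simp only [Polynomial.coeff_monomial]
  rw [Finset.sum_ite_eq' (Finset.Icc 1 N) k (fun j => (MvPolynomial.X j : RR))]

lemma coeff_FF_pow (N d : ℕ) :
    ((FF N) ^ d).coeff N =
      ∑ t ∈ (Finset.Nat.antidiagonalTuple d N).filter (fun t => ∀ i, 0 < t i),
        ∏ i, (MvPolynomial.X (t i) : RR) := by
  rw [coeff_pow_eq]
  rw [← Finset.sum_filter_add_sum_filter_not _ (fun t => ∀ i, 0 < t i)]
  have h2 : ∑ t ∈ (Finset.Nat.antidiagonalTuple d N).filter (fun t => ¬ ∀ i, 0 < t i),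
      ∏ i, (FF N).coeff (t i) = 0 := by
    refine Finset.sum_eq_zero fun t ht => ?_
    rw [Finset.mem_filter] at ht
    push_neg at ht
    obtain ⟨i, hi⟩ := ht.2
    refine Finset.prod_eq_zero (Finset.mem_univ i) ?_
    rw [coeff_FF, if_neg]
    simp only [Finset.mem_Icc]
    omega
  rw [h2, add_zero]
  refine Finset.sum_congr rfl fun t ht => ?_
  rw [Finset.mem_filter, Finset.Nat.mem_antidiagonalTuple] at ht
  refine Finset.prod_congr rfl fun i _ => ?_
  rw [coeff_FF, if_pos]
  rw [Finset.mem_Icc]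
  constructor
  · exact ht.2 i
  · rw [← ht.1]
    exact Finset.single_le_sum (fun j _ => Nat.zero_le (t j)) (Finset.mem_univ i)

/-- `Ψ = ∑_{d=1}^N (-1)^d/d F^d`, so that `cayley N` is its `N`-th coefficient. -/
def Psi (N : ℕ) : Polynomial RR :=
  ∑ d ∈ Finset.Icc 1 N, ((-1 : ℝ) ^ d * (d : ℝ)⁻¹) • (FF N) ^ d

lemma cayley_eq_coeff_Psi (N : ℕ) : cayley N = (Psi N).coeff N := by
  rw [cayley, Psi, Polynomial.finset_sum_coeff]
  refine Finset.sum_congr rfl fun d hd => ?_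
  rw [Polynomial.coeff_smul, coeff_FF_pow]

/-- The vector field as a derivation. -/
def DD (N p : ℕ) : Derivation ℝ RR RR :=
  MvPolynomial.pderiv p +
    ∑ h ∈ Finset.Icc (p + 1) N, (MvPolynomial.X (h - p) : RR) • MvPolynomial.pderiv h

lemma DD_apply (N p : ℕ) (a : RR) :
    DD N p a = MvPolynomial.pderiv p a +
      ∑ h ∈ Finset.Icc (p + 1) N, MvPolynomial.X (h - p) * MvPolynomial.pderiv h a := by
  rw [DD, Derivation.add_apply]
  congr 1
  induction (Finset.Icc (p + 1) N) using Finset.cons_induction with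
  | empty => simp
  | cons i s hi ih =>
    rw [Finset.sum_cons, Derivation.add_apply, Derivation.smul_apply, ih, Finset.sum_cons,
      smul_eq_mul]

lemma DD_X (N p k : ℕ) :
    DD N p (MvPolynomial.X k : RR) =
      (if k = p then 1 else 0) +
        (if k ∈ Finset.Icc (p + 1) N then (MvPolynomial.X (k - p) : RR) else 0) := by
  rw [DD_apply]
  congr 1
  · by_cases h : k = p
    · subst h; rw [if_pos rfl, MvPolynomial.pderiv_X_self]
    · rw [if_neg h, MvPolynomial.pderiv_X_of_ne h]
  · rw [← Finset.sum_ite_eq' (Finset.Icc (p + 1) N) k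
      (fun h => (MvPolynomial.X (h - p) : RR))]
    refine Finset.sum_congr rfl fun h hh => ?_
    by_cases hk : h = k
    · subst hk; rw [if_pos rfl, MvPolynomial.pderiv_X_self, mul_one]
    · rw [if_neg hk, MvPolynomial.pderiv_X_of_ne (Ne.symm hk), mul_zero]

/-- The error term `E = t^p ⋅ ∑_{j=N-p+1}^N x_j t^j`, supported in degrees `> N`. -/
def EE (N p : ℕ) : Polynomial RR :=
  ∑ j ∈ Finset.Icc (N - p + 1) N, Polynomial.monomial (p + j) (MvPolynomial.X j : RR)

lemma coeff_EE (N p m : ℕ) (hp2 : p ≤ N - 1) (hN : 1 ≤ N) (hm : m ≤ N) :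
    (EE N p).coeff m = 0 := by
  rw [EE, Polynomial.finset_sum_coeff]
  refine Finset.sum_eq_zero fun j hj => ?_
  rw [Finset.mem_Icc] at hj
  rw [Polynomial.coeff_monomial, if_neg]
  omega

lemma liftD_FF (N p : ℕ) (hN : 1 ≤ N) (hp1 : 1 ≤ p) (hp2 : p ≤ N - 1) :
    liftD (DD N p) (FF N) = Polynomial.X ^ p * (1 + FF N) - EE N p := by
  have split : Finset.Icc 1 N = Finset.Icc 1 (N - p) ∪ Finset.Icc (N - p + 1) N := by
    ext x; simp only [Finset.mem_Icc, Finset.mem_union]; omega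
  have hdisj : Disjoint (Finset.Icc 1 (N - p)) (Finset.Icc (N - p + 1) N) := by
    rw [Finset.disjoint_left]
    intro x hx1 hx2
    rw [Finset.mem_Icc] at hx1 hx2
    omega
  have hXpF : Polynomial.X ^ p * FF N =
      (∑ j ∈ Finset.Icc 1 (N - p), Polynomial.monomial (p + j) (MvPolynomial.X j : RR)) +
        EE N p := by
    rw [FF, Finset.mul_sum, EE, split, Finset.sum_union hdisj]
    congr 1 <;> exact Finset.sum_congr rfl fun k _ => by
      rw [Polynomial.X_pow_mul_monomial, Nat.add_comm]
  have hDF : liftD (DD N p) (FF N) =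
      Polynomial.X ^ p +
        ∑ j ∈ Finset.Icc 1 (N - p), Polynomial.monomial (p + j) (MvPolynomial.X j : RR) := by
    rw [FF, map_sum]
    have e1 : ∀ k ∈ Finset.Icc 1 N,
        liftD (DD N p) (Polynomial.monomial k (MvPolynomial.X k : RR)) =
          Polynomial.monomial k ((if k = p then (1:RR) else 0)) +
            Polynomial.monomial k
              (if k ∈ Finset.Icc (p + 1) N then (MvPolynomial.X (k - p) : RR) else 0) := by
      intro k _
      rw [liftD_monomial, DD_X, map_add]
    rw [Finset.sum_congr rfl e1, Finset.sum_add_distrib]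
    congr 1
    · have e2 : ∀ k ∈ Finset.Icc 1 N,
          Polynomial.monomial k ((if k = p then (1:RR) else 0)) =
            if k = p then Polynomial.monomial p (1:RR) else 0 := by
        intro k _
        split_ifs with h
        · subst h; rfl
        · exact map_zero _
      rw [Finset.sum_congr rfl e2, Finset.sum_ite_eq' (Finset.Icc 1 N) p
        (fun _ => Polynomial.monomial p (1:RR)), if_pos (by rw [Finset.mem_Icc]; omega),
        Polynomial.X_pow_eq_monomial]
    · have e3 : ∀ k ∈ Finset.Icc 1 N,
          Polynomial.monomial k
              (if k ∈ Finset.Icc (p + 1) N then (MvPolynomial.X (k - p) : RR) else 0) =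
            if k ∈ Finset.Icc (p + 1) N then
              Polynomial.monomial k (MvPolynomial.X (k - p) : RR) else 0 := by
        intro k _
        split_ifs with h
        · rfl
        · exact map_zero _
      rw [Finset.sum_congr rfl e3, Finset.sum_ite_mem]
      have e4 : Finset.Icc 1 N ∩ Finset.Icc (p + 1) N = Finset.Icc (p + 1) N := by
        ext x; simp only [Finset.mem_Icc, Finset.mem_inter]; omega
      rw [e4]
      refine Finset.sum_nbij' (fun k => k - p) (fun j => p + j) ?_ ?_ ?_ ?_ ?_
      · intro k hk; simp only [Finset.mem_Icc] at hk ⊢; omega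
      · intro j hj; simp only [Finset.mem_Icc] at hj ⊢; omega
      · intro k hk; simp only [Finset.mem_Icc] at hk; omega
      · intro j hj; simp only [Finset.mem_Icc] at hj; omega
      · intro k hk
        simp only [Finset.mem_Icc] at hk
        have hkp : p + (k - p) = k := by omega
        rw [hkp]
  rw [hDF, mul_add, mul_one, hXpF]
  ring

lemma neg_one_pow_smul (f : Polynomial RR) (e : ℕ) :
    ((-1 : ℝ) ^ e) • f ^ e = (-f) ^ e := by
  rw [← neg_one_smul ℝ f, _root_.smul_pow]

lemma coeff_mul_zero_left (a b : Polynomial RR) (n : ℕ) (h : ∀ j ≤ n, a.coeff j = 0) :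
    (a * b).coeff n = 0 := by
  rw [Polynomial.coeff_mul]
  refine Finset.sum_eq_zero fun ij hij => ?_
  rw [Finset.HasAntidiagonal.mem_antidiagonal] at hij
  rw [h ij.1 (by omega), zero_mul]

lemma coeff_pow_lt (f : Polynomial RR) (hf : f.coeff 0 = 0) (m j : ℕ) (hj : j < m) :
    (f ^ m).coeff j = 0 := by
  obtain ⟨q, hq⟩ : (Polynomial.X : Polynomial RR) ^ m ∣ f ^ m :=
    pow_dvd_pow_of_dvd (Polynomial.X_dvd_iff.mpr hf) m
  rw [hq]
  refine coeff_mul_zero_left _ _ _ fun i hi => ?_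
  rw [Polynomial.coeff_X_pow, if_neg (by omega)]

lemma liftD_Psi (N p : ℕ) (hN : 1 ≤ N) (hp1 : 1 ≤ p) (hp2 : p ≤ N - 1) :
    liftD (DD N p) (Psi N) =
      -(Polynomial.X ^ p * (1 - (-(FF N)) ^ N)) +
        (∑ e ∈ Finset.range N, (-(FF N)) ^ e) * EE N p := by
  have hdne : ∀ d ∈ Finset.Icc 1 N, ((-1:ℝ)^d * (d:ℝ)⁻¹) * (d:ℝ) = (-1:ℝ)^d := by
    intro d hd
    rw [Finset.mem_Icc] at hd
    have : (d:ℝ) ≠ 0 := Nat.cast_ne_zero.mpr (by omega)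
    rw [mul_assoc, inv_mul_cancel₀ this, mul_one]
  have step1 : liftD (DD N p) (Psi N) =
      ∑ d ∈ Finset.Icc 1 N, ((-1:ℝ)^d) • (FF N ^ (d-1) * liftD (DD N p) (FF N)) := by
    rw [Psi, map_sum]
    refine Finset.sum_congr rfl fun d hd => ?_
    rw [Derivation.map_smul, Derivation.leibniz_pow, smul_eq_mul,
      ← Nat.cast_smul_eq_nsmul ℝ d, smul_smul, hdne d hd]
  have hgeom : (∑ d ∈ Finset.Icc 1 N, ((-1:ℝ)^d) • FF N ^ (d-1)) =
      -(∑ e ∈ Finset.range N, (-(FF N))^e) := by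
    rw [show Finset.Icc 1 N = Finset.Ico 1 (N+1) from (Finset.Ico_add_one_right_eq_Icc ..).symm,
      Finset.sum_Ico_eq_sum_range]
    simp only [Nat.add_sub_cancel]
    rw [← Finset.sum_neg_distrib]
    refine Finset.sum_congr rfl fun e he => ?_
    have h1 : 1 + e - 1 = e := by omega
    conv_rhs => rw [← neg_one_pow_smul (FF N) e]
    rw [h1, pow_add, pow_one, mul_smul, neg_one_smul]
  have step2 : liftD (DD N p) (Psi N) =
      -(∑ e ∈ Finset.range N, (-(FF N))^e) * liftD (DD N p) (FF N) := by
    rw [step1, ← hgeom, Finset.sum_mul]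
    refine Finset.sum_congr rfl fun d hd => ?_
    rw [smul_mul_assoc]
  have hG : (∑ e ∈ Finset.range N, (-(FF N))^e) * (1 + FF N) = 1 - (-(FF N))^N := by
    have h := geom_sum_mul (-(FF N)) N
    linear_combination -h
  rw [step2, liftD_FF N p hN hp1 hp2]
  linear_combination (-(Polynomial.X ^ p : Polynomial RR)) * hG

end CayleyAux

/-- The vector field `X_p = d/dx_p + sum_{h=p+1}^N x_{h-p} d/dx_h` annihilates `Phi_N`. -/
theorem cayley_annihilated_by_Xp (N p : ℕ) (hN : 1 ≤ N) (hp1 : 1 ≤ p) (hp2 : p ≤ N - 1) :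
    MvPolynomial.pderiv p (cayley N) +
      ∑ h ∈ Finset.Icc (p + 1) N,
        MvPolynomial.X (h - p) * MvPolynomial.pderiv h (cayley N) = 0 := by
  rw [← DD_apply, cayley_eq_coeff_Psi, ← coeff_liftD, liftD_Psi N p hN hp1 hp2]
  rw [Polynomial.coeff_add, Polynomial.coeff_neg]
  have hF0 : (-(FF N)).coeff 0 = 0 := by
    rw [Polynomial.coeff_neg, coeff_FF, if_neg (by simp), neg_zero]
  have c1 : ((Polynomial.X : Polynomial RR) ^ p * (1 - (-(FF N)) ^ N)).coeff N = 0 := by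
    rw [mul_sub, mul_one, Polynomial.coeff_sub]
    have d1 : ((Polynomial.X : Polynomial RR) ^ p).coeff N = 0 := by
      rw [Polynomial.coeff_X_pow, if_neg (by omega)]
    have d2 : ((Polynomial.X : Polynomial RR) ^ p * (-(FF N)) ^ N).coeff N = 0 := by
      rw [Polynomial.coeff_mul]
      refine Finset.sum_eq_zero fun ij hij => ?_
      rw [Finset.HasAntidiagonal.mem_antidiagonal] at hij
      by_cases hi : ij.1 = p
      · rw [coeff_pow_lt _ hF0 N ij.2 (by omega), mul_zero]
      · rw [Polynomial.coeff_X_pow, if_neg hi, zero_mul]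
    rw [d1, d2, sub_zero]
  have c2 : ((∑ e ∈ Finset.range N, (-(FF N)) ^ e) * EE N p).coeff N = 0 := by
    rw [mul_comm]
    exact coeff_mul_zero_left _ _ _ fun j hj => coeff_EE N p j hp2 hN hj
  rw [c1, c2, neg_zero, add_zero]
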